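/- Let s be affine and t monotone on a complete lattice. If s ∘ t ≤ t^* ∘ (s ⊔ id), then s^* ∘ t^* ≤ t^* ∘ s^*. Similarly, if s ∘ t ≤ (t ⊔ id) ∘ s^*, then s^* ∘ t^* ≤ t^* ∘ s^*. -/
import Mathlib


/-- The least (pre)fixpoint of `y ↦ x ⊔ s y` (Knaster–Tarski); for monotone `s`
this gives the least closure above `s`. -/
def lstar {X : Type*} [CompleteLattice X] (s : X → X) (x : X) : X :=
  sInf {y | x ⊔ s y ≤ y}

section aux
variable {X : Type*} [CompleteLattice X]

lemma le_lstar (f : X → X) (x : X) : x ≤ lstar f x :=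
  le_sInf fun _ hy => le_trans le_sup_left hy

lemma lstar_le {f : X → X} {x y : X} (h : x ⊔ f y ≤ y) : lstar f x ≤ y :=
  sInf_le h

lemma apply_lstar_le {f : X → X} (hf : Monotone f) (x : X) :
    f (lstar f x) ≤ lstar f x :=
  le_sInf fun _ hy => (hf (sInf_le hy)).trans (le_trans le_sup_right hy)

lemma lstar_mono (f : X → X) : Monotone (lstar f) := fun a b hab =>
  le_sInf fun y hy =>
    sInf_le (show a ⊔ f y ≤ y from
      sup_le (hab.trans (le_sup_left.trans hy)) (le_sup_right.trans hy))

lemma lstar_idem {f : X → X} (hf : Monotone f) (x : X) :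
    lstar f (lstar f x) ≤ lstar f x :=
  lstar_le (sup_le le_rfl (apply_lstar_le hf x))

end aux

/-- Let `s` be affine and `t` monotone. If `s ∘ t ≤ t^* ∘ (s ⊔ id)` then
`s^* ∘ t^* ≤ t^* ∘ s^*`; similarly if `s ∘ t ≤ (t ⊔ id) ∘ s^*` then `s^* ∘ t^* ≤ t^* ∘ s^*`. -/
theorem lstar_comm_of_partial_comm {X : Type*} [CompleteLattice X] (s t : X → X)
    (hsaff : ∀ S : Set X, S.Nonempty → s (sSup S) = ⨆ x ∈ S, s x)
    (ht : Monotone t) :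
    ((∀ x, s (t x) ≤ lstar t (s x ⊔ x)) →
        ∀ x, lstar s (lstar t x) ≤ lstar t (lstar s x)) ∧
    ((∀ x, s (t x) ≤ t (lstar s x) ⊔ lstar s x) →
        ∀ x, lstar s (lstar t x) ≤ lstar t (lstar s x)) := by
  have hs2 : ∀ a b : X, s (a ⊔ b) = s a ⊔ s b := by
    intro a b
    have h := hsaff {a, b} ⟨a, by simp⟩
    rw [sSup_pair] at h
    rw [h, iSup_pair]
  have hsm : Monotone s := by
    intro a b hab
    calc s a ≤ s a ⊔ s b := le_sup_left
    _ = s (a ⊔ b) := (hs2 a b).symm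
    _ = s b := by rw [sup_eq_right.mpr hab]
  constructor
  · intro h x
    -- Lemma A : s (t* y) ≤ t* (s y ⊔ y)
    have lemA : ∀ y : X, s (lstar t y) ≤ lstar t (s y ⊔ y) := by
      intro y
      set T := lstar t (s y ⊔ y) with hT
      set K : Set X := {z | z ≤ T ∧ s z ≤ T} with hK
      have hymem : y ∈ K := ⟨le_sup_right.trans (le_lstar t _), le_sup_left.trans (le_lstar t _)⟩
      set W := sSup K with hW
      have hWT : W ≤ T := sSup_le fun z hz => hz.1
      have hsW : s W ≤ T := by
        rw [hW, hsaff K ⟨y, hymem⟩]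
        exact iSup₂_le fun z hz => hz.2
      have htT : t T ≤ T := apply_lstar_le ht _
      have htWmem : t W ∈ K := by
        refine ⟨(ht hWT).trans htT, ?_⟩
        calc s (t W) ≤ lstar t (s W ⊔ W) := h W
        _ ≤ lstar t T := lstar_mono t (sup_le hsW hWT)
        _ ≤ T := lstar_idem ht _
      have hty : lstar t y ≤ W := lstar_le (sup_le (le_sSup hymem) (le_sSup htWmem))
      exact (hsm hty).trans hsW
    
    have hss : s (lstar s x) ≤ lstar s x := apply_lstar_le hsm _
    refine lstar_le (sup_le (lstar_mono t (le_lstar s x)) ?_)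
    calc s (lstar t (lstar s x)) ≤ lstar t (s (lstar s x) ⊔ lstar s x) := lemA _
    _ = lstar t (lstar s x) := by rw [sup_eq_right.mpr hss]
  · intro h x
    -- Lemma C : s* (t x) ≤ t (s* x) ⊔ s* x
    have lemC : ∀ y : X, lstar s (t y) ≤ t (lstar s y) ⊔ lstar s y := by
      intro y
      refine lstar_le (sup_le (le_sup_left.trans' (ht (le_lstar s y))) ?_)
      rw [hs2]
      refine sup_le ?_ (le_sup_right.trans' (apply_lstar_le hsm y))
      calc s (t (lstar s y)) ≤ t (lstar s (lstar s y)) ⊔ lstar s (lstar s y) := h _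
      _ ≤ t (lstar s y) ⊔ lstar s y :=
          sup_le_sup (ht (lstar_idem hsm y)) (lstar_idem hsm y)
    -- Lemma B : s (t* y) ≤ t* (s* y)
    have lemB : ∀ y : X, s (lstar t y) ≤ lstar t (lstar s y) := by
      intro y
      set T := lstar t (lstar s y) with hT
      set K : Set X := {z | z ≤ T ∧ s z ≤ z} with hK
      have hymem : lstar s y ∈ K := ⟨le_lstar t _, apply_lstar_le hsm y⟩
      set W := sSup K with hW
      have hWT : W ≤ T := sSup_le fun z hz => hz.1
      have hsW : s W ≤ W := by
        rw [hW, hsaff K ⟨_, hymem⟩]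
        exact iSup₂_le fun z hz => hz.2.trans (le_sSup hz)
      have hsWW : lstar s W ≤ W := lstar_le (sup_le le_rfl hsW)
      have htT : t T ≤ T := apply_lstar_le ht _
      have hstW : lstar s (t W) ≤ W := by
        refine le_sSup (show lstar s (t W) ∈ K from ⟨?_, apply_lstar_le hsm _⟩)
        calc lstar s (t W) ≤ t (lstar s W) ⊔ lstar s W := lemC W
        _ ≤ t W ⊔ W := sup_le_sup (ht hsWW) hsWW
        _ ≤ T := sup_le ((ht hWT).trans htT) hWT
      have htW : t W ≤ W := (le_lstar s _).trans hstW
      have hty : lstar t y ≤ W :=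
        lstar_le (sup_le ((le_lstar s y).trans (le_sSup hymem)) htW)
      exact (hsm hty).trans (hsW.trans hWT)
    
    refine lstar_le (sup_le (lstar_mono t (le_lstar s x)) ?_)
    calc s (lstar t (lstar s x)) ≤ lstar t (lstar s (lstar s x)) := lemB _
    _ ≤ lstar t (lstar s x) := lstar_mono t (lstar_idem hsm x)
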